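/- Let k ≥ 2 be a natural number and let f ∈ ℂ⟦X⟧ have constant coefficient 0, coefficient of X equal to 1, and coefficient of X^j equal to 0 for every j with 2 ≤ j < k. Then for every natural number m, the m-fold composite f^{∘m} also has constant coefficient 0, coefficient of X equal to 1, coefficient of X^j equal to 0 for all 2 ≤ j < k, and its coefficient of X^k equals m times the coefficient of X^k of f. -/

import Mathlib

open PowerSeries

/-- Substitution of the power series `g` into the power series `f`, i.e. `f ∘ g = f(g(X))`.
For `g` with zero constant coefficient, the coefficient of `X^k` in `f(g(X))` is
`∑_{n ≤ k} (coeff n f) * (coeff k (g^n))`, since `coeff k (g^n) = 0` for `n > k`. -/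
noncomputable def PowerSeries.compose (f g : PowerSeries ℂ) : PowerSeries ℂ :=
  PowerSeries.mk fun k =>
    ∑ n ∈ Finset.range (k + 1), PowerSeries.coeff n f * PowerSeries.coeff k (g ^ n)

/-- The `m`-fold composite `f^{∘m}`: `f^{∘0} = X` and `f^{∘(m+1)} = f ∘ f^{∘m}`. -/
noncomputable def PowerSeries.iterComp (f : PowerSeries ℂ) : ℕ → PowerSeries ℂ
  | 0 => PowerSeries.X
  | m + 1 => PowerSeries.compose f (PowerSeries.iterComp f m)

lemma pow_coeff_lt (g : PowerSeries ℂ) (hg0 : PowerSeries.coeff 0 g = 0)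
    {n j : ℕ} (h : j < n) : PowerSeries.coeff j (g ^ n) = 0 := by
  have hX : (X : PowerSeries ℂ) ∣ g := X_dvd_iff.mpr (by simpa using hg0)
  have : (X : PowerSeries ℂ) ^ n ∣ g ^ n := pow_dvd_pow_of_dvd hX n
  exact (X_pow_dvd_iff.mp this) j h

lemma pow_coeff_diag (g : PowerSeries ℂ) (hg0 : PowerSeries.coeff 0 g = 0)
    (hg1 : PowerSeries.coeff 1 g = 1) (n : ℕ) :
    PowerSeries.coeff n (g ^ n) = 1 := by
  induction n with
  | zero => simp
  | succ n ih =>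
    rw [pow_succ, mul_comm, PowerSeries.coeff_mul]
    rw [Finset.sum_eq_single (1, n)]
    · rw [hg1, ih, one_mul]
    · rintro ⟨p, q⟩ hpq hne
      simp only [Finset.HasAntidiagonal.mem_antidiagonal] at hpq
      rcases Nat.lt_or_ge q n with hq | hq
      · rw [pow_coeff_lt g hg0 hq, mul_zero]
      · have hp : p = 0 ∨ p = 1 := by omega
        rcases hp with hp | hp
        · subst hp; rw [hg0, zero_mul]
        · exfalso; apply hne
          have hq' : q = n := by omega
          simp [hp, hq']
    · intro h; exact absurd (Finset.HasAntidiagonal.mem_antidiagonal.mpr (by omega)) h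

theorem iterComp_coeff (k : ℕ) (hk : 2 ≤ k) (f : PowerSeries ℂ)
    (h0 : PowerSeries.coeff 0 f = 0) (h1 : PowerSeries.coeff 1 f = 1)
    (hmid : ∀ j, 2 ≤ j → j < k → PowerSeries.coeff j f = 0) (m : ℕ) :
    PowerSeries.coeff 0 (PowerSeries.iterComp f m) = 0 ∧
    PowerSeries.coeff 1 (PowerSeries.iterComp f m) = 1 ∧
    (∀ j, 2 ≤ j → j < k → PowerSeries.coeff j (PowerSeries.iterComp f m) = 0) ∧
    PowerSeries.coeff k (PowerSeries.iterComp f m) = (m : ℂ) * PowerSeries.coeff k f := by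
  induction m with
  | zero =>
    refine ⟨by simp [PowerSeries.iterComp], by simp [PowerSeries.iterComp], ?_, ?_⟩
    · intro j h2 hjk
      simp [PowerSeries.iterComp, PowerSeries.coeff_X]
      omega
    · simp [PowerSeries.iterComp, PowerSeries.coeff_X]
      omega
  | succ m ih =>
    obtain ⟨ih0, ih1, ihmid, ihk⟩ := ih
    set g := PowerSeries.iterComp f m with hg
    have hcomp : PowerSeries.iterComp f (m + 1) = PowerSeries.compose f g := rfl
    have key : ∀ j, PowerSeries.coeff j (PowerSeries.iterComp f (m + 1)) =
        ∑ n ∈ Finset.range (j + 1), PowerSeries.coeff n f * PowerSeries.coeff j (g ^ n) := by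
      intro j; rw [hcomp]; simp [PowerSeries.compose]
    refine ⟨?_, ?_, ?_, ?_⟩
    · rw [key]; simp [h0]
    · rw [key]
      rw [Finset.sum_range_succ, Finset.sum_range_one]
      simp [h0, h1, ih1]
    · intro j h2 hjk
      rw [key]
      apply Finset.sum_eq_zero
      intro n hn
      simp only [Finset.mem_range] at hn
      rcases Nat.lt_or_ge n 2 with hn2 | hn2
      · interval_cases n
        · rw [h0, zero_mul]
        · rw [pow_one, ihmid j h2 hjk, mul_zero]
      · rw [hmid n hn2 (by omega), zero_mul]
    · rw [key]
      rw [Finset.sum_eq_add_of_mem 1 k (by simp; omega) (by simp) (by omega) ?other]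
      · rw [h1, pow_one, ihk, pow_coeff_diag g ih0 ih1, one_mul, mul_one]
        push_cast; ring
      · rintro n hn ⟨hne1, hnek⟩
        simp only [Finset.mem_range] at hn
        rcases Nat.eq_zero_or_pos n with h | h
        · subst h; rw [h0, zero_mul]
        · rw [hmid n (by omega) (by omega), zero_mul]
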